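/- Let (r_t) be a stationary solution of r_t = ζ_t (c² + (a + b r_{t−1})²)^{1/2} with b > 0, c > 0, b² < 1, Eζ₀ = 0, Eζ₀² = 1, μ₃ := Eζ₀³ > 0, E|r_0|³ < ∞, where ζ₀ has a bounded strictly positive density on ℝ. Let (r̃_t) be a stationary solution of the random-coefficient AR(1) equation r̃_t = κ ε_t + b η_t r̃_{t−1}, where ((ε_t, η_t)) are i.i.d. with Eε₀ = Eη₀ = 0, Eε₀² = Eη₀² = 1, ν_{0,3} := Eη₀³ > 0, E|r̃_0|³ < ∞, (ε₀, η₀) has a bounded strictly positive density on ℝ², and the parameters satisfy κρ = a, κ² = a² + c² with ρ := E[ε₀η₀]. Then the bivariate distributions of (r_t, r_{t−1}) and (r̃_t, r̃_{t−1}) are different: for all sufficiently large K > 0, E[r_t³ 1(r_{t−1} < −K)] > 0 whereas E[r̃_t³ 1(r̃_{t−1} < −K)] < 0. -/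

import Mathlib

open MeasureTheory ProbabilityTheory Filter

/-- σ-algebra generated by a family of ℝ²-valued innovations up to time `t`. -/
def pairFiltration {Ω : Type*} [MeasureSpace Ω] (ξ : ℤ → Ω → ℝ × ℝ) (t : ℤ) :
    MeasurableSpace Ω :=
  ⨆ s : {s : ℤ // s ≤ t}, MeasurableSpace.comap (ξ s) inferInstance

/-- σ-algebra `F_t = σ(ζ_s, s ≤ t)` generated by the noise up to time `t`. -/
def noiseFiltration {Ω : Type*} [MeasureSpace Ω] (ζ : ℤ → Ω → ℝ) (t : ℤ) :
    MeasurableSpace Ω :=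
  ⨆ s : {s : ℤ // s ≤ t}, MeasurableSpace.comap (ζ s) inferInstance

/-- Strict stationarity of a process indexed by `ℤ`. -/
def StrictStationary {Ω : Type*} [MeasureSpace Ω] {α : Type*} [MeasurableSpace α]
    (Y : ℤ → Ω → α) : Prop :=
  ∀ (t : ℤ) (n : ℕ) (s : Fin n → ℤ),
    IdentDistrib (fun ω i => Y (s i) ω) (fun ω i => Y (s i + t) ω)
      (ℙ : Measure Ω) (ℙ : Measure Ω)


section Helpers

variable {Ω : Type*} [MeasureSpace Ω] [IsProbabilityMeasure (ℙ : Measure Ω)]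

lemma aux_filt_le {α : Type*} [MeasurableSpace α] (ξ : ℤ → Ω → α)
    (h : ∀ s, Measurable (ξ s)) (u : ℤ) :
    (⨆ s : {s : ℤ // s ≤ u}, MeasurableSpace.comap (ξ s) inferInstance) ≤
      (inferInstance : MeasurableSpace Ω) :=
  iSup_le fun s => (h s).comap_le

lemma aux_indepFun_future {α : Type*} [MeasurableSpace α] (ξ : ℤ → Ω → α)
    (hm : ∀ s, Measurable (ξ s))
    (hind : iIndepFun ξ (ℙ : Measure Ω))
    {t u : ℤ} (hut : u < t) {β : Type*} [MeasurableSpace β] {Y : Ω → β}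
    (hY : Measurable[⨆ s : {s : ℤ // s ≤ u}, MeasurableSpace.comap (ξ s) inferInstance] Y) :
    IndepFun (ξ t) Y (ℙ : Measure Ω) := by
  have h := indep_iSup_of_disjoint (m := fun i => MeasurableSpace.comap (ξ i) inferInstance)
    (fun i => (hm i).comap_le) hind (S := {t}) (T := {s | s ≤ u})
    (by simp only [Set.disjoint_left, Set.mem_singleton_iff, Set.mem_setOf_eq]
        rintro x rfl; omega)
  have h1 : MeasurableSpace.comap (ξ t) inferInstance ≤ ⨆ i ∈ ({t} : Set ℤ),
      MeasurableSpace.comap (ξ i) inferInstance := by simp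
  have h2 : MeasurableSpace.comap Y inferInstance ≤ ⨆ i ∈ {s : ℤ | s ≤ u},
      MeasurableSpace.comap (ξ i) inferInstance := by
    refine le_trans (measurable_iff_comap_le.mp hY) ?_
    rw [iSup_subtype']
    exact le_rfl
  exact indep_of_indep_of_le_right (indep_of_indep_of_le_left h h1) h2

lemma aux_withDensity_pos {α : Type*} [MeasurableSpace α] (ν : Measure α) (f : α → ℝ)
    (hf : Measurable f) (hfpos : ∀ x, 0 < f x) {s : Set α} (hs : MeasurableSet s)
    (hνs : ν s ≠ 0) : 0 < (ν.withDensity fun x => ENNReal.ofReal (f x)) s := by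
  rw [withDensity_apply _ hs, pos_iff_ne_zero]
  intro h
  rw [lintegral_eq_zero_iff hf.ennreal_ofReal] at h
  have h2 : ∀ᵐ x ∂(ν.restrict s), False := by
    filter_upwards [h] with x hx
    exact absurd (by simpa using hx : f x ≤ 0) (not_le.mpr (hfpos x))
  have h3 := ae_iff.mp h2
  simp only [not_false_iff, Set.setOf_true, Measure.restrict_apply_univ] at h3
  exact hνs h3

lemma aux_abs_sq_mul_le (u v : ℝ) : |u^2 * v| ≤ |u|^3 + |v|^3 := by
  have hu := abs_nonneg u; have hv := abs_nonneg v
  rw [abs_mul, abs_pow]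
  rcases le_total (|v|) (|u|) with h | h
  · calc |u|^2*|v| ≤ |u|^2*|u| := mul_le_mul_of_nonneg_left h (pow_nonneg hu 2)
    _ = |u|^3 := by ring
    _ ≤ |u|^3+|v|^3 := le_add_of_nonneg_right (pow_nonneg hv 3)
  · calc |u|^2*|v| ≤ |v|^2*|v| := mul_le_mul_of_nonneg_right (by nlinarith) hv
    _ = |v|^3 := by ring
    _ ≤ |u|^3+|v|^3 := le_add_of_nonneg_left (pow_nonneg hu 3)

lemma aux_integrable_abs_cube (X : Ω → ℝ) (h3 : MemLp X 3 (ℙ : Measure Ω)) :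
    Integrable (fun ω => |X ω|^3) (ℙ : Measure Ω) := by
  have := h3.integrable_norm_rpow (by norm_num) (by norm_num)
  refine this.congr ?_
  filter_upwards with ω
  rw [Real.norm_eq_abs, show (ENNReal.toReal 3) = ((3:ℕ):ℝ) by norm_num,
    Real.rpow_natCast]

lemma aux_integrable_cube (X : Ω → ℝ) (hXm : Measurable X)
    (h3 : MemLp X 3 (ℙ : Measure Ω)) :
    Integrable (fun ω => (X ω)^3) (ℙ : Measure Ω) := by
  refine (aux_integrable_abs_cube X h3).mono' (hXm.pow_const 3).aestronglyMeasurable ?_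
  filter_upwards with ω
  rw [Real.norm_eq_abs, abs_pow]

lemma aux_pow_le_one_add_cube {y : ℝ} (hy : 0 ≤ y) {j : ℕ} (hj : j ≤ 3) :
    y^j ≤ 1 + y^3 := by
  rcases le_total y 1 with h | h
  · have h1 : y^j ≤ 1 := pow_le_one₀ hy h
    have h2 : (0:ℝ) ≤ y^3 := pow_nonneg hy 3
    linarith
  · have h1 : y^j ≤ y^3 := pow_le_pow_right₀ h hj
    linarith

lemma aux_indep_term {β : Type*} [MeasurableSpace β] {ξt : Ω → β} {X : Ω → ℝ}
    {F : β → ℝ} (hF : Measurable F)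
    (hFi : Integrable (fun ω => F (ξt ω)) (ℙ : Measure Ω)) {j : ℕ} (hj : j ≤ 3) (K : ℝ)
    (hind : IndepFun ξt X (ℙ : Measure Ω)) (hXm : Measurable X)
    (hX3 : MemLp X 3 (ℙ : Measure Ω)) :
    Integrable (fun ω => F (ξt ω) * (if X ω < -K then (X ω)^j else 0)) (ℙ : Measure Ω) ∧
    Integrable (fun ω => if X ω < -K then (X ω)^j else 0) (ℙ : Measure Ω) ∧
    (∫ ω, F (ξt ω) * (if X ω < -K then (X ω)^j else 0) ∂(ℙ : Measure Ω))
      = (∫ ω, F (ξt ω) ∂(ℙ : Measure Ω)) *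
        ∫ ω, (if X ω < -K then (X ω)^j else 0) ∂(ℙ : Measure Ω) := by
  have hG0m : Measurable (fun x : ℝ => if x < -K then x^j else 0) :=
    Measurable.ite measurableSet_Iio (measurable_id.pow_const j) measurable_const
  have hGm : Measurable fun ω => if X ω < -K then (X ω)^j else 0 := hG0m.comp hXm
  have hGi : Integrable (fun ω => if X ω < -K then (X ω)^j else 0) (ℙ : Measure Ω) := by
    have hb : Integrable (fun ω => 1 + |X ω|^3) (ℙ : Measure Ω) :=
      (integrable_const 1).add (aux_integrable_abs_cube X hX3)
    refine hb.mono' hGm.aestronglyMeasurable ?_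
    filter_upwards with ω
    rw [Real.norm_eq_abs]
    by_cases h : X ω < -K
    · rw [if_pos h, abs_pow]; exact aux_pow_le_one_add_cube (abs_nonneg _) hj
    · rw [if_neg h]; simp only [abs_zero]; positivity
  have hI : IndepFun (fun ω => F (ξt ω))
      (fun ω => if X ω < -K then (X ω)^j else 0) (ℙ : Measure Ω) :=
    hind.comp hF hG0m
  exact ⟨hI.integrable_mul hFi hGi, hGi, hI.integral_fun_mul_eq_mul_integral hFi.aestronglyMeasurable hGi.aestronglyMeasurable⟩

lemma aux_integral_sum4 (c0 c1 c2 c3 : ℝ) {f0 f1 f2 f3 : Ω → ℝ}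
    (h0 : Integrable f0 (ℙ : Measure Ω)) (h1 : Integrable f1 (ℙ : Measure Ω))
    (h2 : Integrable f2 (ℙ : Measure Ω)) (h3 : Integrable f3 (ℙ : Measure Ω)) :
    ∫ ω, (c0 * f0 ω + c1 * f1 ω + c2 * f2 ω + c3 * f3 ω) ∂(ℙ : Measure Ω)
      = c0 * (∫ ω, f0 ω ∂(ℙ : Measure Ω)) + c1 * (∫ ω, f1 ω ∂(ℙ : Measure Ω))
        + c2 * (∫ ω, f2 ω ∂(ℙ : Measure Ω)) + c3 * (∫ ω, f3 ω ∂(ℙ : Measure Ω)) := by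
  have e3 : ∫ ω, (c0 * f0 ω + c1 * f1 ω) ∂(ℙ : Measure Ω)
      = (∫ ω, c0 * f0 ω ∂(ℙ : Measure Ω)) + ∫ ω, c1 * f1 ω ∂(ℙ : Measure Ω) :=
    integral_add (h0.const_mul c0) (h1.const_mul c1)
  have e2 : ∫ ω, (c0 * f0 ω + c1 * f1 ω + c2 * f2 ω) ∂(ℙ : Measure Ω)
      = (∫ ω, (c0 * f0 ω + c1 * f1 ω) ∂(ℙ : Measure Ω)) + ∫ ω, c2 * f2 ω ∂(ℙ : Measure Ω) :=
    integral_add (by exact (h0.const_mul c0).add (h1.const_mul c1)) (h2.const_mul c2)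
  have e1 : ∫ ω, (c0 * f0 ω + c1 * f1 ω + c2 * f2 ω + c3 * f3 ω) ∂(ℙ : Measure Ω)
      = (∫ ω, (c0 * f0 ω + c1 * f1 ω + c2 * f2 ω) ∂(ℙ : Measure Ω))
        + ∫ ω, c3 * f3 ω ∂(ℙ : Measure Ω) :=
    integral_add (by exact ((h0.const_mul c0).add (h1.const_mul c1)).add (h2.const_mul c2))
      (h3.const_mul c3)
  rw [e1, e2, e3, integral_const_mul, integral_const_mul, integral_const_mul, integral_const_mul]

end Helpers

section Arch
variable {Ω : Type*} [MeasureSpace Ω] [IsProbabilityMeasure (ℙ : Measure Ω)]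

set_option maxHeartbeats 1000000 in
lemma aux_arch_pos
    (ζ : ℤ → Ω → ℝ) (hζmeas : ∀ t, Measurable (ζ t))
    (hζindep : iIndepFun ζ (ℙ : Measure Ω))
    (hζident : ∀ t, IdentDistrib (ζ t) (ζ 0) (ℙ : Measure Ω) (ℙ : Measure Ω))
    (hζ3 : MemLp (ζ 0) 3 (ℙ : Measure Ω))
    (hζskew : 0 < ∫ ω, (ζ 0 ω) ^ 3 ∂(ℙ : Measure Ω))
    (f : ℝ → ℝ) (hfmeas : Measurable f) (hfpos : ∀ x, 0 < f x)
    (hfdens : Measure.map (ζ 0) (ℙ : Measure Ω) =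
      (volume : Measure ℝ).withDensity fun x => ENNReal.ofReal (f x))
    (a b c : ℝ) (hb : 0 < b) (hc : 0 < c)
    (r : ℤ → Ω → ℝ)
    (hradapted : ∀ t : ℤ, Measurable[noiseFiltration ζ t] (r t))
    (hr3 : ∀ t : ℤ, MemLp (r t) 3 (ℙ : Measure Ω))
    (hreq : ∀ t : ℤ, r t =ᵐ[(ℙ : Measure Ω)]
      fun ω => ζ t ω * Real.sqrt (c ^ 2 + (a + b * r (t - 1) ω) ^ 2))
    (t : ℤ) (K : ℝ) (hK : 0 < K) :
    0 < ∫ ω, (if r (t - 1) ω < -K then (r t ω) ^ 3 else 0) ∂(ℙ : Measure Ω) := by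
  have hrm : ∀ u : ℤ, Measurable (r u) := fun u =>
    (hradapted u).mono (aux_filt_le ζ hζmeas u) le_rfl
  have hXm : Measurable (r (t-1)) := hrm (t-1)
  set s : Set Ω := {ω | r (t-1) ω < -K} with hsdef
  have hs : MeasurableSet s := measurableSet_lt hXm measurable_const
  -- the volatility function
  set σf : ℝ → ℝ := fun x => Real.sqrt (c^2 + (a + b*x)^2) with hσf
  have hσfm : Measurable σf := by
    apply Measurable.sqrt
    fun_prop
  have hσc : ∀ x, c ≤ σf x := fun x => by
    rw [hσf]
    calc c = Real.sqrt (c^2) := (Real.sqrt_sq hc.le).symm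
    _ ≤ _ := Real.sqrt_le_sqrt (by nlinarith [sq_nonneg (a+b*x)])
  have hσnn : ∀ x, 0 ≤ σf x := fun x => Real.sqrt_nonneg _
  have hσub : ∀ x, σf x ≤ c + |a| + b*|x| := fun x => by
    rw [hσf]
    have h2 : |a + b*x| ≤ |a| + b*|x| := by
      calc |a + b*x| ≤ |a| + |b*x| := abs_add_le _ _
      _ = |a| + b*|x| := by rw [abs_mul, abs_of_pos hb]
    have h3 : (a+b*x)^2 ≤ (|a|+b*|x|)^2 := by
      rw [← sq_abs (a+b*x)]
      exact pow_le_pow_left₀ (abs_nonneg _) h2 2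
    calc Real.sqrt (c^2+(a+b*x)^2) ≤ Real.sqrt ((c + |a| + b*|x|)^2) := by
          apply Real.sqrt_le_sqrt
          nlinarith [h3, mul_nonneg hc.le (by positivity : (0:ℝ) ≤ |a|+b*|x|)]
    _ = _ := Real.sqrt_sq (by positivity)
  -- the composed function
  set G0 : ℝ → ℝ := fun x => if x < -K then (σf x)^3 else 0 with hG0
  have hG0m : Measurable G0 :=
    Measurable.ite measurableSet_Iio (hσfm.pow_const 3) measurable_const
  -- step 1 : rewrite the integrand a.e.
  have hae : (fun ω => if r (t-1) ω < -K then (r t ω)^3 else 0) =ᵐ[(ℙ : Measure Ω)]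
      fun ω => (ζ t ω)^3 * G0 (r (t-1) ω) := by
    filter_upwards [hreq t] with ω hω
    by_cases h : r (t-1) ω < -K
    · rw [if_pos h, hG0]
      simp only [if_pos h, hσf]
      rw [hω]
      ring
    · rw [if_neg h, hG0]
      simp [h]
  -- step 2 : independence
  have hGfilt : Measurable[noiseFiltration ζ (t-1)] (fun ω => G0 (r (t-1) ω)) :=
    hG0m.comp (hradapted (t-1))
  have hind : IndepFun (ζ t) (fun ω => G0 (r (t-1) ω)) (ℙ : Measure Ω) :=
    aux_indepFun_future ζ hζmeas hζindep (by omega : (t:ℤ) - 1 < t) hGfilt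
  have hZG : IndepFun (fun ω => (ζ t ω)^3) (fun ω => G0 (r (t-1) ω)) (ℙ : Measure Ω) :=
    hind.comp (measurable_id.pow_const 3) measurable_id
  -- step 3 : integrability
  have hζt3 : MemLp (ζ t) 3 (ℙ : Measure Ω) := (hζident t).symm.memLp_snd hζ3
  have hZint : Integrable (fun ω => (ζ t ω)^3) (ℙ : Measure Ω) :=
    aux_integrable_cube (ζ t) (hζmeas t) hζt3
  have hWlp : MemLp (fun ω => c + |a| + b * |r (t-1) ω|) 3 (ℙ : Measure Ω) := by
    have h1 : MemLp (fun ω => |r (t-1) ω|) 3 (ℙ : Measure Ω) := (hr3 (t-1)).abs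
    exact (memLp_const (c + |a|)).add (h1.const_mul b)
  have hBint : Integrable (fun ω => (c + |a| + b * |r (t-1) ω|)^3) (ℙ : Measure Ω) := by
    refine (aux_integrable_abs_cube _ hWlp).congr ?_
    filter_upwards with ω
    rw [abs_of_nonneg (by positivity)]
  have hGint : Integrable (fun ω => G0 (r (t-1) ω)) (ℙ : Measure Ω) := by
    refine hBint.mono' (hG0m.comp hXm).aestronglyMeasurable ?_
    filter_upwards with ω
    rw [Real.norm_eq_abs, hG0]
    by_cases h : r (t-1) ω < -K
    · simp only [if_pos h]
      rw [abs_of_nonneg (by positivity)]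
      exact pow_le_pow_left₀ (hσnn _) (hσub _) 3
    · simp only [if_neg h, abs_zero]
      positivity
  -- step 4 : product formula
  have hprod : ∫ ω, (ζ t ω)^3 * G0 (r (t-1) ω) ∂(ℙ : Measure Ω)
      = (∫ ω, (ζ t ω)^3 ∂(ℙ : Measure Ω)) * ∫ ω, G0 (r (t-1) ω) ∂(ℙ : Measure Ω) :=
    hZG.integral_fun_mul_eq_mul_integral hZint.aestronglyMeasurable hGint.aestronglyMeasurable
  have hζtEq : ∫ ω, (ζ t ω)^3 ∂(ℙ : Measure Ω) = ∫ ω, (ζ 0 ω)^3 ∂(ℙ : Measure Ω) :=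
    ((hζident t).comp (measurable_id.pow_const 3)).integral_eq
  -- step 5 : positivity of the event
  have hspos : 0 < (ℙ : Measure Ω) s := by
    have h1 : ∀ᵐ ω ∂(ℙ : Measure Ω), ω ∈ {ω | ζ (t-1) ω < -K/c} → ω ∈ s := by
      filter_upwards [hreq (t-1)] with ω hω hζω
      have hζω' : ζ (t-1) ω < -K/c := hζω
      have hζ0 : ζ (t-1) ω ≤ 0 :=
        le_of_lt (lt_of_lt_of_le hζω' (by rw [neg_div]; simp [le_of_lt, div_pos hK hc]))
      have hle : r (t-1) ω ≤ ζ (t-1) ω * c := by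
        rw [hω]
        exact mul_le_mul_of_nonpos_left (hσc (r (t-1-1) ω)) hζ0
      have h2 : ζ (t-1) ω * c < -K := by
        rw [← lt_div_iff₀ hc]
        exact hζω'
      exact lt_of_le_of_lt hle h2
    have h2 : (ℙ : Measure Ω) {ω | ζ (t-1) ω < -K/c} ≤ (ℙ : Measure Ω) s :=
      measure_mono_ae h1
    have h3 : (ℙ : Measure Ω) {ω | ζ (t-1) ω < -K/c}
        = Measure.map (ζ 0) (ℙ : Measure Ω) (Set.Iio (-K/c)) := by
      rw [← (hζident (t-1)).map_eq,
        Measure.map_apply (hζmeas (t-1)) measurableSet_Iio]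
      rfl
    have h4 : 0 < Measure.map (ζ 0) (ℙ : Measure Ω) (Set.Iio (-K/c)) := by
      rw [hfdens]
      exact aux_withDensity_pos _ f hfmeas hfpos measurableSet_Iio
        (by rw [Real.volume_Iio]; simp)
    calc (0:ENNReal) < _ := h4
    _ = _ := h3.symm
    _ ≤ _ := h2
  -- step 6 : lower bound for ∫ G
  have hχint : Integrable (s.indicator (1 : Ω → ℝ)) (ℙ : Measure Ω) :=
    (integrable_indicator_iff hs).2 (integrableOn_const (measure_ne_top _ _))
  have hGlb : c^3 * ((ℙ : Measure Ω) s).toReal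
      ≤ ∫ ω, G0 (r (t-1) ω) ∂(ℙ : Measure Ω) := by
    have hmono : ∫ ω, c^3 * (s.indicator (1 : Ω → ℝ) ω) ∂(ℙ : Measure Ω)
        ≤ ∫ ω, G0 (r (t-1) ω) ∂(ℙ : Measure Ω) := by
      refine integral_mono (hχint.const_mul _) hGint ?_
      intro ω
      by_cases h : ω ∈ s
      · have h' : r (t-1) ω < -K := h
        simp only [Set.indicator_of_mem h, Pi.one_apply, mul_one, hG0, if_pos h']
        exact pow_le_pow_left₀ hc.le (hσc _) 3
      · have h' : ¬ (r (t-1) ω < -K) := h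
        simp only [Set.indicator_of_notMem h, Pi.one_apply, mul_zero, hG0, if_neg h']
        exact le_rfl
    rwa [integral_const_mul, integral_indicator_one hs, measureReal_def] at hmono
  have hτ : 0 < ((ℙ : Measure Ω) s).toReal :=
    ENNReal.toReal_pos hspos.ne' (measure_ne_top _ _)
  -- conclusion
  rw [integral_congr_ae hae, hprod, hζtEq]
  exact mul_pos hζskew (lt_of_lt_of_le (by positivity) hGlb)

end Arch

section AR
variable {Ω : Type*} [MeasureSpace Ω] [IsProbabilityMeasure (ℙ : Measure Ω)]

set_option maxHeartbeats 2000000 in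
lemma aux_ar_neg
    (ε η : ℤ → Ω → ℝ) (hεmeas : ∀ t, Measurable (ε t)) (hηmeas : ∀ t, Measurable (η t))
    (hεηindep : iIndepFun
      (fun t ω => (ε t ω, η t ω)) (ℙ : Measure Ω))
    (hεηident : ∀ t, IdentDistrib (fun ω => (ε t ω, η t ω)) (fun ω => (ε 0 ω, η 0 ω))
      (ℙ : Measure Ω) (ℙ : Measure Ω))
    (hε3 : MemLp (ε 0) 3 (ℙ : Measure Ω)) (hη3 : MemLp (η 0) 3 (ℙ : Measure Ω))
    (hη0skew : 0 < ∫ ω, (η 0 ω) ^ 3 ∂(ℙ : Measure Ω))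
    (g : ℝ × ℝ → ℝ) (hgmeas : Measurable g) (hgpos : ∀ x, 0 < g x)
    (hgdens : Measure.map (fun ω => (ε 0 ω, η 0 ω)) (ℙ : Measure Ω) =
      (volume : Measure (ℝ × ℝ)).withDensity fun x => ENNReal.ofReal (g x))
    (b κ : ℝ) (hb : 0 < b) (hκ0 : κ ≠ 0)
    (rt : ℤ → Ω → ℝ)
    (hrtadapted : ∀ t : ℤ, Measurable[pairFiltration (fun s ω => (ε s ω, η s ω)) t] (rt t))
    (hrt3 : ∀ t : ℤ, MemLp (rt t) 3 (ℙ : Measure Ω))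
    (hrteq : ∀ t : ℤ, rt t =ᵐ[(ℙ : Measure Ω)]
      fun ω => κ * ε t ω + b * η t ω * rt (t - 1) ω) (t : ℤ) :
    ∃ K₀ : ℝ, 1 ≤ K₀ ∧ ∀ K : ℝ, K₀ ≤ K →
      (∫ ω, (if rt (t - 1) ω < -K then (rt t ω) ^ 3 else 0) ∂(ℙ : Measure Ω)) < 0 := by
  set ξf : ℤ → Ω → ℝ × ℝ := fun s ω => (ε s ω, η s ω) with hξf
  have hξm : ∀ u, Measurable (ξf u) := fun u => (hεmeas u).prodMk (hηmeas u)
  have hrtm : ∀ u : ℤ, Measurable (rt u) := fun u =>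
    (hrtadapted u).mono (aux_filt_le ξf hξm u) le_rfl
  -- third-order joint moments
  set m0 : ℝ := ∫ ω, (ε 0 ω) ^ 3 ∂(ℙ : Measure Ω) with hm0
  set m1 : ℝ := ∫ ω, (ε 0 ω) ^ 2 * η 0 ω ∂(ℙ : Measure Ω) with hm1
  set m2 : ℝ := ∫ ω, ε 0 ω * (η 0 ω) ^ 2 ∂(ℙ : Measure Ω) with hm2
  set m3 : ℝ := ∫ ω, (η 0 ω) ^ 3 ∂(ℙ : Measure Ω) with hm3
  have hm3pos : 0 < m3 := hη0skew
  have hc3 : 0 < b ^ 3 * m3 := mul_pos (pow_pos hb 3) hm3pos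
  -- the threshold
  set K₀ : ℝ := max 1 ((|κ ^ 3 * m0| + |3 * κ ^ 2 * b * m1| + |3 * κ * b ^ 2 * m2| + 1)
    / (b ^ 3 * m3)) with hK₀def
  have hK₀1 : (1:ℝ) ≤ K₀ := le_max_left _ _
  -- the polynomial bound
  have hφ : ∀ x : ℝ, x ≤ -K₀ →
      κ ^ 3 * m0 + 3 * κ ^ 2 * b * m1 * x + 3 * κ * b ^ 2 * m2 * x ^ 2
        + b ^ 3 * m3 * x ^ 3 ≤ -1 := by
    intro x hx
    have hx1 : x ≤ -1 := le_trans hx (neg_le_neg hK₀1)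
    have hx2 : x ≤ -((|κ ^ 3 * m0| + |3 * κ ^ 2 * b * m1| + |3 * κ * b ^ 2 * m2| + 1)
        / (b ^ 3 * m3)) := le_trans hx (neg_le_neg (le_max_right _ _))
    have hx2' : b ^ 3 * m3 * x
        ≤ -(|κ ^ 3 * m0| + |3 * κ ^ 2 * b * m1| + |3 * κ * b ^ 2 * m2| + 1) := by
      have h' : (|κ ^ 3 * m0| + |3 * κ ^ 2 * b * m1| + |3 * κ * b ^ 2 * m2| + 1)
          / (b ^ 3 * m3) ≤ -x := by linarith
      have h'' := (div_le_iff₀ hc3).mp h'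
      nlinarith [h'']
    have hxsq : 1 ≤ x ^ 2 := by nlinarith
    have habs : |x| ≤ x ^ 2 := by
      rw [abs_of_nonpos (by linarith)]; nlinarith
    have p0 : κ ^ 3 * m0 ≤ |κ ^ 3 * m0| * x ^ 2 :=
      le_trans (le_abs_self _) (le_mul_of_one_le_right (abs_nonneg _) hxsq)
    have p1 : 3 * κ ^ 2 * b * m1 * x ≤ |3 * κ ^ 2 * b * m1| * x ^ 2 := by
      calc 3 * κ ^ 2 * b * m1 * x ≤ |3 * κ ^ 2 * b * m1 * x| := le_abs_self _
      _ = |3 * κ ^ 2 * b * m1| * |x| := abs_mul _ _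
      _ ≤ |3 * κ ^ 2 * b * m1| * x ^ 2 := mul_le_mul_of_nonneg_left habs (abs_nonneg _)
    have p2 : 3 * κ * b ^ 2 * m2 * x ^ 2 ≤ |3 * κ * b ^ 2 * m2| * x ^ 2 :=
      mul_le_mul_of_nonneg_right (le_abs_self _) (sq_nonneg x)
    have p3 : b ^ 3 * m3 * x ^ 3
        ≤ -(|κ ^ 3 * m0| + |3 * κ ^ 2 * b * m1| + |3 * κ * b ^ 2 * m2| + 1) * x ^ 2 := by
      have hrw : b ^ 3 * m3 * x ^ 3 = (b ^ 3 * m3 * x) * x ^ 2 := by ring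
      rw [hrw]
      exact mul_le_mul_of_nonneg_right hx2' (sq_nonneg x)
    nlinarith [p0, p1, p2, p3, hxsq]
  refine ⟨K₀, hK₀1, ?_⟩
  intro K hK
  have hKpos : (0:ℝ) < K := lt_of_lt_of_le (lt_of_lt_of_le one_pos hK₀1) hK
  -- notation
  have hXm : Measurable (rt (t-1)) := hrtm (t-1)
  have hX3 : MemLp (rt (t-1)) 3 (ℙ : Measure Ω) := hrt3 (t-1)
  set s : Set Ω := {ω | rt (t-1) ω < -K} with hsdef
  have hs : MeasurableSet s := measurableSet_lt hXm measurable_const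
  -- independence of the time-t innovation from the past
  have hXfilt : Measurable[⨆ u : {u : ℤ // u ≤ t - 1},
      MeasurableSpace.comap (ξf u) inferInstance] (rt (t-1)) := hrtadapted (t-1)
  have hindX : IndepFun (ξf t) (rt (t-1)) (ℙ : Measure Ω) :=
    aux_indepFun_future ξf hξm hεηindep (by omega : (t:ℤ) - 1 < t) hXfilt
  -- measurability of the monomials
  have hF0m : Measurable (fun p : ℝ × ℝ => p.1 ^ 3) := measurable_fst.pow_const 3
  have hF1m : Measurable (fun p : ℝ × ℝ => p.1 ^ 2 * p.2) :=
    (measurable_fst.pow_const 2).mul measurable_snd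
  have hF2m : Measurable (fun p : ℝ × ℝ => p.1 * p.2 ^ 2) :=
    measurable_fst.mul (measurable_snd.pow_const 2)
  have hF3m : Measurable (fun p : ℝ × ℝ => p.2 ^ 3) := measurable_snd.pow_const 3
  -- moments of the time-t innovations
  have hεt3 : MemLp (ε t) 3 (ℙ : Measure Ω) :=
    (((hεηident t).comp measurable_fst).symm.memLp_snd hε3 : _)
  have hηt3 : MemLp (η t) 3 (ℙ : Measure Ω) :=
    (((hεηident t).comp measurable_snd).symm.memLp_snd hη3 : _)
  have hF0i : Integrable (fun ω => (fun p : ℝ × ℝ => p.1 ^ 3) (ξf t ω)) (ℙ : Measure Ω) :=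
    aux_integrable_cube (ε t) (hεmeas t) hεt3
  have hF3i : Integrable (fun ω => (fun p : ℝ × ℝ => p.2 ^ 3) (ξf t ω)) (ℙ : Measure Ω) :=
    aux_integrable_cube (η t) (hηmeas t) hηt3
  have habscube : Integrable (fun ω => |ε t ω| ^ 3 + |η t ω| ^ 3) (ℙ : Measure Ω) :=
    (aux_integrable_abs_cube (ε t) hεt3).add (aux_integrable_abs_cube (η t) hηt3)
  have hF1i : Integrable (fun ω => (fun p : ℝ × ℝ => p.1 ^ 2 * p.2) (ξf t ω)) (ℙ : Measure Ω) := by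
    refine habscube.mono' (((hεmeas t).pow_const 2).mul (hηmeas t)).aestronglyMeasurable ?_
    filter_upwards with ω
    rw [Real.norm_eq_abs]
    exact aux_abs_sq_mul_le (ε t ω) (η t ω)
  have hF2i : Integrable (fun ω => (fun p : ℝ × ℝ => p.1 * p.2 ^ 2) (ξf t ω)) (ℙ : Measure Ω) := by
    refine habscube.mono' ((hεmeas t).mul ((hηmeas t).pow_const 2)).aestronglyMeasurable ?_
    filter_upwards with ω
    rw [Real.norm_eq_abs]
    have h := aux_abs_sq_mul_le (η t ω) (ε t ω)
    calc |ε t ω * η t ω ^ 2| = |η t ω ^ 2 * ε t ω| := by rw [mul_comm]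
    _ ≤ |η t ω| ^ 3 + |ε t ω| ^ 3 := h
    _ = |ε t ω| ^ 3 + |η t ω| ^ 3 := by ring
  -- the four independent-product computations
  have T0 := aux_indep_term hF0m hF0i (by norm_num : (0:ℕ) ≤ 3) K hindX hXm hX3
  have T1 := aux_indep_term hF1m hF1i (by norm_num : (1:ℕ) ≤ 3) K hindX hXm hX3
  have T2 := aux_indep_term hF2m hF2i (by norm_num : (2:ℕ) ≤ 3) K hindX hXm hX3
  have T3 := aux_indep_term hF3m hF3i (by norm_num : (3:ℕ) ≤ 3) K hindX hXm hX3
  -- moment transfers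
  have hμ0 : ∫ ω, (fun p : ℝ × ℝ => p.1 ^ 3) (ξf t ω) ∂(ℙ : Measure Ω) = m0 :=
    ((hεηident t).comp hF0m).integral_eq
  have hμ1 : ∫ ω, (fun p : ℝ × ℝ => p.1 ^ 2 * p.2) (ξf t ω) ∂(ℙ : Measure Ω) = m1 :=
    ((hεηident t).comp hF1m).integral_eq
  have hμ2 : ∫ ω, (fun p : ℝ × ℝ => p.1 * p.2 ^ 2) (ξf t ω) ∂(ℙ : Measure Ω) = m2 :=
    ((hεηident t).comp hF2m).integral_eq
  have hμ3 : ∫ ω, (fun p : ℝ × ℝ => p.2 ^ 3) (ξf t ω) ∂(ℙ : Measure Ω) = m3 :=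
    ((hεηident t).comp hF3m).integral_eq
  -- decomposition of the integrand
  have hae : (fun ω => if rt (t-1) ω < -K then (rt t ω) ^ 3 else 0) =ᵐ[(ℙ : Measure Ω)]
      (fun ω => κ ^ 3 * ((fun p : ℝ × ℝ => p.1 ^ 3) (ξf t ω)
          * (if rt (t-1) ω < -K then (rt (t-1) ω) ^ 0 else 0))
        + 3 * κ ^ 2 * b * ((fun p : ℝ × ℝ => p.1 ^ 2 * p.2) (ξf t ω)
          * (if rt (t-1) ω < -K then (rt (t-1) ω) ^ 1 else 0))
        + 3 * κ * b ^ 2 * ((fun p : ℝ × ℝ => p.1 * p.2 ^ 2) (ξf t ω)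
          * (if rt (t-1) ω < -K then (rt (t-1) ω) ^ 2 else 0))
        + b ^ 3 * ((fun p : ℝ × ℝ => p.2 ^ 3) (ξf t ω)
          * (if rt (t-1) ω < -K then (rt (t-1) ω) ^ 3 else 0))) := by
    filter_upwards [hrteq t] with ω hω
    by_cases h : rt (t-1) ω < -K
    · simp only [if_pos h]
      rw [hω]
      ring
    · simp only [if_neg h, mul_zero, add_zero, zero_add]
  -- computing the integral
  set E0 : ℝ := ∫ ω, (if rt (t-1) ω < -K then (rt (t-1) ω) ^ 0 else 0) ∂(ℙ : Measure Ω) with hE0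
  set E1 : ℝ := ∫ ω, (if rt (t-1) ω < -K then (rt (t-1) ω) ^ 1 else 0) ∂(ℙ : Measure Ω) with hE1
  set E2 : ℝ := ∫ ω, (if rt (t-1) ω < -K then (rt (t-1) ω) ^ 2 else 0) ∂(ℙ : Measure Ω) with hE2
  set E3 : ℝ := ∫ ω, (if rt (t-1) ω < -K then (rt (t-1) ω) ^ 3 else 0) ∂(ℙ : Measure Ω) with hE3
  have hψpt : (fun ω => if rt (t-1) ω < -K then κ ^ 3 * m0 + 3 * κ ^ 2 * b * m1 * (rt (t-1) ω)
      + 3 * κ * b ^ 2 * m2 * (rt (t-1) ω) ^ 2 + b ^ 3 * m3 * (rt (t-1) ω) ^ 3 else 0)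
      = fun ω => (κ ^ 3 * m0) * (if rt (t-1) ω < -K then (rt (t-1) ω) ^ 0 else 0)
        + (3 * κ ^ 2 * b * m1) * (if rt (t-1) ω < -K then (rt (t-1) ω) ^ 1 else 0)
        + (3 * κ * b ^ 2 * m2) * (if rt (t-1) ω < -K then (rt (t-1) ω) ^ 2 else 0)
        + (b ^ 3 * m3) * (if rt (t-1) ω < -K then (rt (t-1) ω) ^ 3 else 0) := by
    funext ω
    by_cases h : rt (t-1) ω < -K
    · simp only [if_pos h]; ring
    · simp only [if_neg h, mul_zero, add_zero]
  have hIval : ∫ ω, (if rt (t-1) ω < -K then (rt t ω) ^ 3 else 0) ∂(ℙ : Measure Ω)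
      = κ ^ 3 * (m0 * E0) + 3 * κ ^ 2 * b * (m1 * E1) + 3 * κ * b ^ 2 * (m2 * E2)
        + b ^ 3 * (m3 * E3) := by
    rw [integral_congr_ae hae,
      aux_integral_sum4 (κ ^ 3) (3 * κ ^ 2 * b) (3 * κ * b ^ 2) (b ^ 3) T0.1 T1.1 T2.1 T3.1,
      T0.2.2, T1.2.2, T2.2.2, T3.2.2, hμ0, hμ1, hμ2, hμ3]
  have hψint : Integrable (fun ω => if rt (t-1) ω < -K then κ ^ 3 * m0
      + 3 * κ ^ 2 * b * m1 * (rt (t-1) ω) + 3 * κ * b ^ 2 * m2 * (rt (t-1) ω) ^ 2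
      + b ^ 3 * m3 * (rt (t-1) ω) ^ 3 else 0) (ℙ : Measure Ω) := by
    rw [hψpt]
    exact ((((T0.2.1.const_mul (κ ^ 3 * m0)).add (T1.2.1.const_mul (3 * κ ^ 2 * b * m1))).add
      (T2.2.1.const_mul (3 * κ * b ^ 2 * m2))).add (T3.2.1.const_mul (b ^ 3 * m3)))
  have hψval : ∫ ω, (if rt (t-1) ω < -K then κ ^ 3 * m0 + 3 * κ ^ 2 * b * m1 * (rt (t-1) ω)
      + 3 * κ * b ^ 2 * m2 * (rt (t-1) ω) ^ 2 + b ^ 3 * m3 * (rt (t-1) ω) ^ 3 else 0)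
        ∂(ℙ : Measure Ω)
      = (κ ^ 3 * m0) * E0 + (3 * κ ^ 2 * b * m1) * E1 + (3 * κ * b ^ 2 * m2) * E2
        + (b ^ 3 * m3) * E3 := by
    rw [hψpt,
      aux_integral_sum4 (κ ^ 3 * m0) (3 * κ ^ 2 * b * m1) (3 * κ * b ^ 2 * m2) (b ^ 3 * m3)
        T0.2.1 T1.2.1 T2.2.1 T3.2.1]
  have hIψ : ∫ ω, (if rt (t-1) ω < -K then (rt t ω) ^ 3 else 0) ∂(ℙ : Measure Ω)
      = ∫ ω, (if rt (t-1) ω < -K then κ ^ 3 * m0 + 3 * κ ^ 2 * b * m1 * (rt (t-1) ω)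
        + 3 * κ * b ^ 2 * m2 * (rt (t-1) ω) ^ 2 + b ^ 3 * m3 * (rt (t-1) ω) ^ 3 else 0)
        ∂(ℙ : Measure Ω) := by
    rw [hIval, hψval]; ring
  -- positivity of the event
  have hspos : 0 < (ℙ : Measure Ω) s := by
    obtain ⟨n, hn⟩ : ∃ n : ℤ, (ℙ : Measure Ω) (rt (t-1-1) ⁻¹' Set.Ico (n:ℝ) (n+1)) ≠ 0 := by
      by_contra hno
      push_neg at hno
      have hU : (⋃ n : ℤ, rt (t-1-1) ⁻¹' Set.Ico (n:ℝ) (n+1)) = Set.univ := by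
        ext ω
        simp only [Set.mem_iUnion, Set.mem_univ, iff_true, Set.mem_preimage, Set.mem_Ico]
        exact ⟨⌊rt (t-1-1) ω⌋, Int.floor_le _, by push_cast; exact Int.lt_floor_add_one _⟩
      have h0 : (ℙ : Measure Ω) Set.univ = 0 := by
        rw [← hU]; exact measure_iUnion_null hno
      simp [measure_univ] at h0
    set D : ℝ := |(n:ℝ)| + 1 with hD
    have hDpos : 0 < D := by positivity
    set δ : ℝ := 1 / (b * D + 1) with hδ
    have hδpos : 0 < δ := by positivity
    set U : Set ℝ := {u : ℝ | κ * u < -(K+1)} with hU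
    have hUm : MeasurableSet U := measurableSet_lt (measurable_id.const_mul κ) measurable_const
    have hUvol : (volume : Measure ℝ) U ≠ 0 := by
      rcases hκ0.lt_or_gt with hneg | hpos
      · have hsub : Set.Ioi ((-(K+1))/κ) ⊆ U := fun u hu => by
          have hu' : (-(K+1))/κ < u := hu
          have h2 : u * κ < -(K+1) := (div_lt_iff_of_neg hneg).mp hu'
          show κ * u < -(K+1)
          rw [mul_comm]
          exact h2
        have hmono : (volume : Measure ℝ) (Set.Ioi ((-(K+1))/κ)) ≤ (volume : Measure ℝ) U :=
          measure_mono hsub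
        rw [Real.volume_Ioi] at hmono
        intro h0
        rw [h0] at hmono
        simp at hmono
      · have hsub : Set.Iio ((-(K+1))/κ) ⊆ U := fun u hu => by
          have hu' : u < (-(K+1))/κ := hu
          have h2 : u * κ < -(K+1) := (lt_div_iff₀ hpos).mp hu'
          show κ * u < -(K+1)
          rw [mul_comm]
          exact h2
        have hmono : (volume : Measure ℝ) (Set.Iio ((-(K+1))/κ)) ≤ (volume : Measure ℝ) U :=
          measure_mono hsub
        rw [Real.volume_Iio] at hmono
        intro h0
        rw [h0] at hmono
        simp at hmono
    set V : Set ℝ := Set.Ioo (-δ) δ with hV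
    have hVvol : (volume : Measure ℝ) V ≠ 0 := by
      rw [hV, Real.volume_Ioo]
      simp only [ne_eq, ENNReal.ofReal_eq_zero, not_le]
      linarith
    have hWm : MeasurableSet (U ×ˢ V) := hUm.prod measurableSet_Ioo
    have hWvol : (volume : Measure (ℝ × ℝ)) (U ×ˢ V) ≠ 0 := by
      rw [Measure.volume_eq_prod, Measure.prod_prod]
      exact mul_ne_zero hUvol hVvol
    have hWpos : (ℙ : Measure Ω) (ξf (t-1) ⁻¹' (U ×ˢ V)) ≠ 0 := by
      rw [← Measure.map_apply (hξm (t-1)) hWm, (hεηident (t-1)).map_eq, hgdens]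
      exact (aux_withDensity_pos _ g hgmeas hgpos hWm hWvol).ne'
    have hYfilt : Measurable[⨆ u : {u : ℤ // u ≤ t - 1 - 1},
        MeasurableSpace.comap (ξf u) inferInstance] (rt (t-1-1)) := hrtadapted (t-1-1)
    have hindY : IndepFun (ξf (t-1)) (rt (t-1-1)) (ℙ : Measure Ω) :=
      aux_indepFun_future ξf hξm hεηindep (by omega : (t:ℤ) - 1 - 1 < t - 1) hYfilt
    have hmul := hindY.measure_inter_preimage_eq_mul (U ×ˢ V)
      (Set.Ico (n:ℝ) (n+1)) hWm measurableSet_Ico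
    have hApos : 0 < (ℙ : Measure Ω)
        (ξf (t-1) ⁻¹' (U ×ˢ V) ∩ rt (t-1-1) ⁻¹' Set.Ico (n:ℝ) (n+1)) := by
      rw [hmul, pos_iff_ne_zero]
      exact mul_ne_zero hWpos hn
    have hsub : ∀ᵐ ω ∂(ℙ : Measure Ω),
        ω ∈ (ξf (t-1) ⁻¹' (U ×ˢ V) ∩ rt (t-1-1) ⁻¹' Set.Ico (n:ℝ) (n+1)) → ω ∈ s := by
      filter_upwards [hrteq (t-1)] with ω hω hmem
      obtain ⟨hmW, hmY⟩ := hmem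
      obtain ⟨hUω, hVω⟩ := hmW
      have hUω' : κ * ε (t-1) ω < -(K+1) := hUω
      have hVω' : η (t-1) ω ∈ Set.Ioo (-δ) δ := hVω
      have hmY' : rt (t-1-1) ω ∈ Set.Ico (n:ℝ) (n+1) := hmY
      have hYb : |rt (t-1-1) ω| ≤ D := by
        obtain ⟨h1, h2⟩ := hmY'
        rw [abs_le, hD]
        constructor
        · linarith [neg_abs_le ((n:ℝ))]
        · linarith [le_abs_self ((n:ℝ))]
      have hηb : |η (t-1) ω| ≤ δ := by
        obtain ⟨h1, h2⟩ := hVω'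
        rw [abs_le]
        exact ⟨le_of_lt h1, le_of_lt h2⟩
      have hbd : b * δ * D < 1 := by
        have hrw : b * δ * D = (b * D) / (b * D + 1) := by rw [hδ]; ring
        rw [hrw, div_lt_one (by positivity)]
        linarith
      have hprod : |b * η (t-1) ω * rt (t-1-1) ω| < 1 := by
        rw [abs_mul, abs_mul, abs_of_pos hb]
        calc b * |η (t-1) ω| * |rt (t-1-1) ω| ≤ b * δ * D := by
              apply mul_le_mul (mul_le_mul_of_nonneg_left hηb hb.le) hYb (abs_nonneg _)
                (by positivity)
        _ < 1 := hbd
      have hX' : rt (t-1) ω < -K := by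
        rw [hω]
        have h2 := (abs_lt.mp hprod).2
        linarith
      exact hX'
    exact lt_of_lt_of_le hApos (measure_mono_ae hsub)
  -- indicator bound
  have hχint : Integrable (s.indicator (1 : Ω → ℝ)) (ℙ : Measure Ω) :=
    (integrable_indicator_iff hs).2 (integrableOn_const (measure_ne_top _ _))
  have hτ : 0 < ((ℙ : Measure Ω) s).toReal :=
    ENNReal.toReal_pos hspos.ne' (measure_ne_top _ _)
  have hmono : ∫ ω, (if rt (t-1) ω < -K then κ ^ 3 * m0 + 3 * κ ^ 2 * b * m1 * (rt (t-1) ω)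
      + 3 * κ * b ^ 2 * m2 * (rt (t-1) ω) ^ 2 + b ^ 3 * m3 * (rt (t-1) ω) ^ 3 else 0)
        ∂(ℙ : Measure Ω)
      ≤ ∫ ω, -(s.indicator (1 : Ω → ℝ) ω) ∂(ℙ : Measure Ω) := by
    refine integral_mono hψint hχint.neg ?_
    intro ω
    by_cases h : ω ∈ s
    · have h' : rt (t-1) ω < -K := h
      have hxK : rt (t-1) ω ≤ -K₀ := by linarith [hK]
      simp only [if_pos h', Set.indicator_of_mem h, Pi.one_apply]
      exact hφ _ hxK
    · have h' : ¬ (rt (t-1) ω < -K) := h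
      simp only [if_neg h', Set.indicator_of_notMem h]
      simp
  rw [hIψ]
  calc _ ≤ ∫ ω, -(s.indicator (1 : Ω → ℝ) ω) ∂(ℙ : Measure Ω) := hmono
  _ = -((ℙ : Measure Ω) s).toReal := by rw [integral_neg, integral_indicator_one hs, measureReal_def]
  _ < 0 := by linarith

end AR

/-- **Example 2 (distinctness of the asymmetric ARCH(1) and the random-coefficient AR(1))**:
under the stated positivity, density and moment conditions and the parameter matching
`κρ = a`, `κ² = a² + c²`, for all large `K` one has `E[r_t³ 1(r_{t-1} < -K)] > 0` while
`E[r̃_t³ 1(r̃_{t-1} < -K)] < 0`; in particular the bivariate distributions of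
`(r_t, r_{t-1})` and `(r̃_t, r̃_{t-1})` are different. -/
theorem arch1_vs_rcar1_distributions_differ
    {Ω : Type*} [MeasureSpace Ω] [IsProbabilityMeasure (ℙ : Measure Ω)]
    -- the ARCH(1) noise and its bounded strictly positive density
    (ζ : ℤ → Ω → ℝ) (hζmeas : ∀ t, Measurable (ζ t))
    (hζindep : iIndepFun ζ (ℙ : Measure Ω))
    (hζident : ∀ t, IdentDistrib (ζ t) (ζ 0) (ℙ : Measure Ω) (ℙ : Measure Ω))
    (hζmean : ∫ ω, ζ 0 ω ∂(ℙ : Measure Ω) = 0)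
    (hζvar : ∫ ω, (ζ 0 ω) ^ 2 ∂(ℙ : Measure Ω) = 1)
    (hζ3 : MemLp (ζ 0) 3 (ℙ : Measure Ω))
    (hζskew : 0 < ∫ ω, (ζ 0 ω) ^ 3 ∂(ℙ : Measure Ω))
    (f : ℝ → ℝ) (hfmeas : Measurable f) (hfpos : ∀ x, 0 < f x)
    (hfbdd : ∃ M : ℝ, ∀ x, f x ≤ M)
    (hfdens : Measure.map (ζ 0) (ℙ : Measure Ω) =
      (volume : Measure ℝ).withDensity fun x => ENNReal.ofReal (f x))
    -- the AR(1) innovations and their bounded strictly positive joint density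
    (ε η : ℤ → Ω → ℝ) (hεmeas : ∀ t, Measurable (ε t)) (hηmeas : ∀ t, Measurable (η t))
    (hεηindep : iIndepFun
      (fun t ω => (ε t ω, η t ω)) (ℙ : Measure Ω))
    (hεηident : ∀ t, IdentDistrib (fun ω => (ε t ω, η t ω)) (fun ω => (ε 0 ω, η 0 ω))
      (ℙ : Measure Ω) (ℙ : Measure Ω))
    (hεmean : ∫ ω, ε 0 ω ∂(ℙ : Measure Ω) = 0)
    (hηmean : ∫ ω, η 0 ω ∂(ℙ : Measure Ω) = 0)
    (hεvar : ∫ ω, (ε 0 ω) ^ 2 ∂(ℙ : Measure Ω) = 1)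
    (hηvar : ∫ ω, (η 0 ω) ^ 2 ∂(ℙ : Measure Ω) = 1)
    (hε3 : MemLp (ε 0) 3 (ℙ : Measure Ω)) (hη3 : MemLp (η 0) 3 (ℙ : Measure Ω))
    (hη0skew : 0 < ∫ ω, (η 0 ω) ^ 3 ∂(ℙ : Measure Ω))
    (g : ℝ × ℝ → ℝ) (hgmeas : Measurable g) (hgpos : ∀ x, 0 < g x)
    (hgbdd : ∃ M : ℝ, ∀ x, g x ≤ M)
    (hgdens : Measure.map (fun ω => (ε 0 ω, η 0 ω)) (ℙ : Measure Ω) =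
      (volume : Measure (ℝ × ℝ)).withDensity fun x => ENNReal.ofReal (g x))
    -- parameters
    (a b c κ : ℝ) (hb : 0 < b) (hc : 0 < c) (hb1 : b ^ 2 < 1)
    (hκρ : κ * (∫ ω, ε 0 ω * η 0 ω ∂(ℙ : Measure Ω)) = a)
    (hκ2 : κ ^ 2 = a ^ 2 + c ^ 2)
    -- the stationary ARCH(1) solution
    (r : ℤ → Ω → ℝ)
    (hradapted : ∀ t : ℤ, Measurable[noiseFiltration ζ t] (r t))
    (hrstat : StrictStationary r)
    (hr3 : ∀ t : ℤ, MemLp (r t) 3 (ℙ : Measure Ω))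
    (hreq : ∀ t : ℤ, r t =ᵐ[(ℙ : Measure Ω)]
      fun ω => ζ t ω * Real.sqrt (c ^ 2 + (a + b * r (t - 1) ω) ^ 2))
    -- the stationary random-coefficient AR(1) solution
    (rt : ℤ → Ω → ℝ)
    (hrtadapted : ∀ t : ℤ, Measurable[pairFiltration (fun s ω => (ε s ω, η s ω)) t] (rt t))
    (hrtstat : StrictStationary rt)
    (hrt3 : ∀ t : ℤ, MemLp (rt t) 3 (ℙ : Measure Ω))
    (hrteq : ∀ t : ℤ, rt t =ᵐ[(ℙ : Measure Ω)]
      fun ω => κ * ε t ω + b * η t ω * rt (t - 1) ω) :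
    ∀ t : ℤ,
      (∃ K₀ : ℝ, 0 < K₀ ∧ ∀ K : ℝ, K₀ ≤ K →
        (0 < ∫ ω, (if r (t - 1) ω < -K then (r t ω) ^ 3 else 0) ∂(ℙ : Measure Ω)) ∧
        (∫ ω, (if rt (t - 1) ω < -K then (rt t ω) ^ 3 else 0) ∂(ℙ : Measure Ω)) < 0) ∧
      ¬ IdentDistrib (fun ω => (r t ω, r (t - 1) ω)) (fun ω => (rt t ω, rt (t - 1) ω))
          (ℙ : Measure Ω) (ℙ : Measure Ω) := by
  intro t
  have hκ0 : κ ≠ 0 := by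
    intro h
    rw [h] at hκ2
    nlinarith [sq_nonneg a, sq_nonneg c, hc]
  obtain ⟨K₀, hK₀1, hAR⟩ := aux_ar_neg ε η hεmeas hηmeas hεηindep hεηident hε3 hη3 hη0skew
    g hgmeas hgpos hgdens b κ hb hκ0 rt hrtadapted hrt3 hrteq t
  have hK₀pos : (0:ℝ) < K₀ := lt_of_lt_of_le one_pos hK₀1
  have hARCH : ∀ K : ℝ, 0 < K →
      0 < ∫ ω, (if r (t - 1) ω < -K then (r t ω) ^ 3 else 0) ∂(ℙ : Measure Ω) :=
    fun K hK => aux_arch_pos ζ hζmeas hζindep hζident hζ3 hζskew f hfmeas hfpos hfdens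
      a b c hb hc r hradapted hr3 hreq t K hK
  refine ⟨⟨K₀, hK₀pos, fun K hK => ⟨hARCH K (lt_of_lt_of_le hK₀pos hK), hAR K hK⟩⟩, ?_⟩
  intro hid
  have hφm : Measurable (fun p : ℝ × ℝ => if p.2 < -K₀ then p.1 ^ 3 else 0) := by
    refine Measurable.ite ?_ (measurable_fst.pow_const 3) measurable_const
    exact measurableSet_lt measurable_snd measurable_const
  have heq := (hid.comp hφm).integral_eq
  have heq' : (∫ ω, (if r (t - 1) ω < -K₀ then (r t ω) ^ 3 else 0) ∂(ℙ : Measure Ω))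
      = ∫ ω, (if rt (t - 1) ω < -K₀ then (rt t ω) ^ 3 else 0) ∂(ℙ : Measure Ω) := heq
  have h1 := hARCH K₀ hK₀pos
  have h2 := hAR K₀ le_rfl
  linarith
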